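/- The one-sided limits of the exchange ratio -Δy/Δx as Δx → 0 are (1/(1-τ))·(α/(1-α))·(y/x) from below (ask) and (1-τ)·(α/(1-α))·(y/x) from above (bid). In particular the bid price is strictly less than the ask price whenever τ ∈ (0,1). -/

import Mathlib

/-- Output of a sale of `z > 0` units of X. -/
noncomputable def fplus (τ β x y z : ℝ) : ℝ := y * (1 - (x / (x + (1 - τ) * z)) ^ β)

/-- (Negative of the) amount of Y paid when buying `-z > 0` units of X (so `fminus < 0` for
`z < 0`; the exchange ratio is `fminus z / z`). -/
noncomputable def fminus (τ β x y z : ℝ) : ℝ := y / (1 - τ) * (1 - (x / (x + z)) ^ β)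

lemma key_slope (β x c : ℝ) (hx : 0 < x) :
    Filter.Tendsto (fun z : ℝ => (1 - (x / (x + c * z)) ^ β) / z)
      (nhdsWithin 0 {(0:ℝ)}ᶜ) (nhds (β * c / x)) := by
  have hf : HasDerivAt (fun z : ℝ => x / (x + c * z)) (-(c / x)) 0 := by
    have h1 : HasDerivAt (fun z : ℝ => x + c * z) c 0 := by
      simpa using ((hasDerivAt_id (0:ℝ)).const_mul c).const_add x
    have hne : x + c * 0 ≠ 0 := by simpa using hx.ne'
    have := (hasDerivAt_const (0:ℝ) x).div h1 hne
    refine this.congr_deriv ?_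
    field_simp
    simp only [zero_mul, add_zero, zero_sub]
    rw [div_eq_iff (pow_ne_zero 2 hx.ne')]
    ring
  have hg : HasDerivAt (fun z : ℝ => 1 - (x / (x + c * z)) ^ β) (β * c / x) 0 := by
    have hne : x / (x + c * 0) ≠ 0 := by
      simp [hx.ne', div_self hx.ne']
    have h2 := (hf.rpow_const (p := β) (Or.inl hne)).const_sub 1
    refine h2.congr_deriv ?_
    simp [div_self hx.ne']
    ring
  have h3 := hasDerivAt_iff_tendsto_slope.mp hg
  have : (slope (fun z : ℝ => 1 - (x / (x + c * z)) ^ β) 0)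
      = fun z : ℝ => (1 - (x / (x + c * z)) ^ β) / z := by
    funext z
    simp [slope_def_field, div_self hx.ne']
  rwa [this] at h3

/-- The one-sided limits of the exchange ratio `-Δy/Δx` as `Δx → 0` are
`(1/(1-τ))·(α/(1-α))·(y/x)` from below (ask) and `(1-τ)·(α/(1-α))·(y/x)` from above (bid);
moreover the bid price is strictly less than the ask price. -/
theorem stmt_4 (α τ β x y : ℝ)
    (hα : α ∈ Set.Ioo (0 : ℝ) 1) (hτ : τ ∈ Set.Ioo (0 : ℝ) 1)
    (hβ : β = α / (1 - α)) (hx : 0 < x) (hy : 0 < y) :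
    Filter.Tendsto (fun z => fminus τ β x y z / z) (nhdsWithin 0 (Set.Iio 0))
      (nhds (1 / (1 - τ) * (α / (1 - α)) * (y / x))) ∧
    Filter.Tendsto (fun z => fplus τ β x y z / z) (nhdsWithin 0 (Set.Ioi 0))
      (nhds ((1 - τ) * (α / (1 - α)) * (y / x))) ∧
    (1 - τ) * (α / (1 - α)) * (y / x) < 1 / (1 - τ) * (α / (1 - α)) * (y / x) := by
  obtain ⟨hα0, hα1⟩ := hα
  obtain ⟨hτ0, hτ1⟩ := hτ
  have h1τ : 0 < 1 - τ := by linarith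
  have h1α : 0 < 1 - α := by linarith
  refine ⟨?_, ?_, ?_⟩
  · have h := ((key_slope β x 1 hx).mono_left
      (nhdsWithin_mono 0 (fun z hz => by exact ne_of_lt hz))).const_mul (y / (1 - τ))
    have heq : (fun z : ℝ => y / (1 - τ) * ((1 - (x / (x + 1 * z)) ^ β) / z))
        = fun z => fminus τ β x y z / z := by
      funext z; simp [fminus, mul_div_assoc]
    rw [heq] at h
    convert h using 2
    · rfl
    rw [hβ]
    field_simp
  · have h := ((key_slope β x (1 - τ) hx).mono_left
      (nhdsWithin_mono 0 (fun z hz => by exact ne_of_gt hz))).const_mul y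
    have heq : (fun z : ℝ => y * ((1 - (x / (x + (1 - τ) * z)) ^ β) / z))
        = fun z => fplus τ β x y z / z := by
      funext z; simp [fplus, mul_div_assoc]
    rw [heq] at h
    convert h using 2
    · rfl
    rw [hβ]
    field_simp
  · have hA : 0 < α / (1 - α) * (y / x) := by positivity
    have h2 : (1 - τ) < 1 / (1 - τ) := by
      rw [lt_div_iff₀ h1τ]; nlinarith
    calc (1 - τ) * (α / (1 - α)) * (y / x)
        = (1 - τ) * (α / (1 - α) * (y / x)) := by ring
      _ < 1 / (1 - τ) * (α / (1 - α) * (y / x)) := by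
          exact mul_lt_mul_of_pos_right h2 hA
      _ = 1 / (1 - τ) * (α / (1 - α)) * (y / x) := by ring
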